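/- arXiv:1805.08979 — 2 statements merged into one kernel-verified Lean document; each statement's English description precedes it below -/
import Mathlib

section
/- In stage i > 1 of the reward design scheme, under the designed reward function H_i(s), the unique better response step in configuration s ∈ T_i \ {s_i} is that miner p_{m_i(s)} moves from s_f.p_{i−1} to s_f.p_i. -/
open Finset Function

/-- Total mining power invested in coin `c` in configuration `s`. -/
noncomputable def totalPower {ι C : Type*} [Fintype ι] [DecidableEq C]
    (m : ι → ℝ) (s : ι → C) (c : C) : ℝ :=
  ∑ p, if s p = c then m p else 0

/-- Revenue per unit of coin `c` in configuration `s`. -/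
noncomputable def RPU {ι C : Type*} [Fintype ι] [DecidableEq C]
    (m : ι → ℝ) (F : C → ℝ) (s : ι → C) (c : C) : ℝ :=
  F c / totalPower m s c

/-- Payoff of miner `p` in configuration `s`. -/
noncomputable def payoff {ι C : Type*} [Fintype ι] [DecidableEq C]
    (m : ι → ℝ) (F : C → ℝ) (s : ι → C) (p : ι) : ℝ :=
  m p * F (s p) / totalPower m s (s p)

/-- A better response step of miner `p` moving to coin `c`. -/
def betterStep {ι C : Type*} [Fintype ι] [DecidableEq ι] [DecidableEq C]
    (m : ι → ℝ) (F : C → ℝ) (s : ι → C) (p : ι) (c : C) : Prop :=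
  payoff m F s p < payoff m F (Function.update s p c) p

/-- Miner `p` is stable in `s`: it has no better response step. -/
def minerStable {ι C : Type*} [Fintype ι] [DecidableEq ι] [DecidableEq C]
    (m : ι → ℝ) (F : C → ℝ) (s : ι → C) (p : ι) : Prop :=
  ∀ c, ¬ betterStep m F s p c

/-- A configuration is stable (a pure equilibrium) if no miner has a better response step. -/
def stableConfig {ι C : Type*} [Fintype ι] [DecidableEq ι] [DecidableEq C]
    (m : ι → ℝ) (F : C → ℝ) (s : ι → C) : Prop :=
  ∀ p c, ¬ betterStep m F s p c

/-- `R(s) = max_c RPU_c(s)`. -/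
noncomputable def maxRPU {ι C : Type*} [Fintype ι] [Fintype C] [DecidableEq C] [Nonempty C]
    (m : ι → ℝ) (F : C → ℝ) (s : ι → C) : ℝ :=
  Finset.univ.sup' Finset.univ_nonempty (RPU m F s)

/-- The designed reward function of stage `i` at configuration `s`: the target coin
`ctar = s_f.p_i` gets reward `R(s)·(M_{ctar}(s) + w)` where `w` is the anchor's power,
every other coin `c` gets `R(s)·M_c(s)`. -/
noncomputable def designedReward {ι C : Type*} [Fintype ι] [Fintype C] [DecidableEq C]
    [Nonempty C] (m : ι → ℝ) (F : C → ℝ) (s : ι → C) (ctar : C) (w : ℝ) : C → ℝ :=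
  fun c => if c = ctar then maxRPU m F s * (totalPower m s ctar + w)
           else maxRPU m F s * totalPower m s c


section Aux

variable {ι C : Type*} [Fintype ι] [DecidableEq ι] [DecidableEq C]

lemma tp_nonneg (m : ι → ℝ) (hm : ∀ p, 0 < m p) (s : ι → C) (c : C) :
    0 ≤ totalPower m s c :=
  Finset.sum_nonneg fun p _ => by split_ifs; exacts [(hm p).le, le_rfl]

lemma tp_ge (m : ι → ℝ) (hm : ∀ p, 0 < m p) (s : ι → C) {p : ι} {c : C} (h : s p = c) :
    m p ≤ totalPower m s c := by
  have := Finset.single_le_sum (f := fun q => if s q = c then m q else 0)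
    (fun q _ => by split_ifs; exacts [(hm q).le, le_rfl]) (Finset.mem_univ p)
  simpa [totalPower, h] using this

lemma tp_update (m : ι → ℝ) (s : ι → C) (p : ι) {c : C} (h : s p ≠ c) :
    totalPower m (Function.update s p c) c = totalPower m s c + m p := by
  unfold totalPower
  rw [← Finset.add_sum_erase _ _ (Finset.mem_univ p),
      ← Finset.add_sum_erase _ (fun q => if s q = c then m q else 0) (Finset.mem_univ p)]
  rw [Finset.sum_congr rfl (fun q hq => by
    rw [Function.update_of_ne (Finset.ne_of_mem_erase hq)])]
  simp [h]
  ring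

end Aux

/-- in stage `i > 1` of the reward design scheme (here `iprev = p_{i-1}`,
`icur = p_i`, mover `j = m_i(s)`, anchor `a = a_i(s) = m_i(s) − 1`), under the designed
rewards `H_i(s)`, the unique better response step at `s ∈ T_i \ {s_i}` is that miner `j`
moves from `s_f.p_{i-1}` to `s_f.p_i`. -/
theorem stage_unique_better_response {C : Type*} [Fintype C] [DecidableEq C] [Nonempty C]
    {n : ℕ} (m : Fin n → ℝ) (F : C → ℝ) (s_f : Fin n → C)
    (hm : ∀ p, 0 < m p) (hF : ∀ c, 0 < F c)
    (hdec : ∀ k l : Fin n, k < l → m l < m k)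
    (hsf : stableConfig m F s_f)
    (iprev icur : Fin n) (hstage : (iprev : ℕ) + 1 = (icur : ℕ))
    (hcoins : s_f iprev ≠ s_f icur)
    (s : Fin n → C)
    (hT₁ : ∀ k, k < icur → s k = s_f k)
    (hT₂ : ∀ k, icur ≤ k → s k = s_f icur ∨ s k = s_f iprev)
    (j a : Fin n) (hj₀ : icur ≤ j) (hj₁ : s j = s_f iprev)
    (hj₂ : ∀ l, j < l → s l = s_f icur) (ha : (a : ℕ) + 1 = (j : ℕ)) :
    betterStep m (designedReward m F s (s_f icur) (m a)) s j (s_f icur) ∧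
      ∀ (p : Fin n) (c : C),
        betterStep m (designedReward m F s (s_f icur) (m a)) s p c →
          p = j ∧ c = s_f icur := by

  have hRpos : 0 < maxRPU m F s := by
    have hMsj : 0 < totalPower m s (s j) := lt_of_lt_of_le (hm j) (tp_ge m hm s rfl)
    have h1 : 0 < RPU m F s (s j) := by unfold RPU; exact div_pos (hF _) hMsj
    exact lt_of_lt_of_le h1 (Finset.le_sup' (RPU m F s) (Finset.mem_univ (s j)))
  have hXnn : 0 ≤ totalPower m s (s_f icur) := tp_nonneg m hm s (s_f icur)
  -- payoff formulas
  have payoff_cur : ∀ p : Fin n, s p ≠ s_f icur →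
      payoff m (designedReward m F s (s_f icur) (m a)) s p = m p * maxRPU m F s := by
    intro p hp
    have hM : 0 < totalPower m s (s p) := lt_of_lt_of_le (hm p) (tp_ge m hm s rfl)
    simp only [payoff, designedReward, if_neg hp]
    field_simp
  have payoff_cur_tar : ∀ p : Fin n, s p = s_f icur →
      payoff m (designedReward m F s (s_f icur) (m a)) s p =
        m p * (maxRPU m F s * (totalPower m s (s_f icur) + m a)) /
          totalPower m s (s_f icur) := by
    intro p hp
    simp only [payoff, designedReward, hp, eq_self_iff_true, if_true]
  have payoff_move : ∀ (p : Fin n) (c : C), s p ≠ c →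
      payoff m (designedReward m F s (s_f icur) (m a)) (Function.update s p c) p =
        m p * designedReward m F s (s_f icur) (m a) c / (totalPower m s c + m p) := by
    intro p c hpc
    simp only [payoff, Function.update_self, tp_update m s p hpc]
  have hsj : s j ≠ s_f icur := by rw [hj₁]; exact hcoins
  have haj : (a : ℕ) < (j : ℕ) := by omega
  have hmja : m j < m a := hdec a j (Fin.lt_def.mpr haj)
  constructor
  · unfold betterStep
    rw [payoff_cur j hsj, payoff_move j (s_f icur) hsj]
    simp only [designedReward, eq_self_iff_true, if_true]
    rw [lt_div_iff₀ (by linarith [hm j])]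
    nlinarith [mul_pos (hm j) hRpos]
  · intro p c hb
    by_cases hcp : c = s p
    · exact absurd hb (by unfold betterStep; rw [hcp, Function.update_eq_self]; exact lt_irrefl _)
    unfold betterStep at hb
    rw [payoff_move p c (fun h => hcp h.symm)] at hb
    by_cases hct : c = s_f icur
    · subst hct
      have hsp : s p ≠ s_f icur := fun h => hcp h.symm
      rw [payoff_cur p hsp] at hb
      simp only [designedReward, eq_self_iff_true, if_true] at hb
      rw [lt_div_iff₀ (by linarith [hm p])] at hb
      have hpa : m p < m a := by
        by_contra hle
        push_neg at hle
        nlinarith [mul_pos (hm p) hRpos]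
      have hap : (a : ℕ) < (p : ℕ) := by
        by_contra hle
        push_neg at hle
        rcases lt_or_eq_of_le hle with h | h
        · exact absurd hpa (not_lt.mpr (hdec p a (Fin.lt_def.mpr h)).le)
        · rw [Fin.ext h] at hpa; exact lt_irrefl _ hpa
      have hpj : p = j := by
        rcases lt_or_eq_of_le (show (j : ℕ) ≤ (p : ℕ) by omega) with h | h
        · exact absurd (hj₂ p (Fin.lt_def.mpr h)) hsp
        · exact Fin.ext h.symm
      exact ⟨hpj, rfl⟩
    · exfalso
      simp only [designedReward, if_neg hct] at hb
      have hMc : 0 ≤ totalPower m s c := tp_nonneg m hm s c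
      have hd : 0 < totalPower m s c + m p := by linarith [hm p]
      have hafter : m p * (maxRPU m F s * totalPower m s c) / (totalPower m s c + m p)
          < m p * maxRPU m F s := by
        rw [div_lt_iff₀ hd]; nlinarith [mul_pos (hm p) hRpos]
      by_cases hsp : s p = s_f icur
      · have hX : 0 < totalPower m s (s_f icur) := lt_of_lt_of_le (hm p) (tp_ge m hm s hsp)
        rw [payoff_cur_tar p hsp] at hb
        have hge : m p * maxRPU m F s ≤
            m p * (maxRPU m F s * (totalPower m s (s_f icur) + m a)) /
              totalPower m s (s_f icur) := by
          rw [le_div_iff₀ hX]; nlinarith [mul_pos (hm p) hRpos, hm a]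
        linarith
      · rw [payoff_cur p hsp] at hb; linarith
end

section
/- Each stage i > 1 of the dynamic reward design algorithm terminates after finitely many loop iterations, ending in configuration s_i: the rank of the binary vector vec(s) (indicating for j ≥ i whether p_j is on s_f.p_i) strictly increases lexicographically with each iteration. -/
open Finset Function

open Classical in
/-- `m_i(s)`: the least index `j` such that every miner strictly after `j` is on the
target coin `ctar = s_f.p_i`. -/
noncomputable def moverIdx {C : Type*} [DecidableEq C] {n : ℕ} (hn : 0 < n)
    (ctar : C) (s : Fin n → C) : Fin n :=
  (Finset.univ.filter (fun j : Fin n => ∀ l, j < l → s l = ctar)).min'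
    ⟨⟨n - 1, by omega⟩, by
      simp only [Finset.mem_filter, Finset.mem_univ, true_and]
      intro l hl
      rw [Fin.lt_def] at hl
      simp only [Fin.val_mk] at hl
      exact absurd hl (by have := l.isLt; omega)⟩

/-- The stage-`i` designed reward function, as a function of the configuration:
the anchor is `a_i(s) = m_i(s) − 1`. -/
noncomputable def stageReward {C : Type*} [Fintype C] [DecidableEq C] [Nonempty C]
    {n : ℕ} (hn : 0 < n) (m : Fin n → ℝ) (F : C → ℝ) (ctar : C) (s : Fin n → C) : C → ℝ :=
  designedReward m F s ctar (m ⟨(moverIdx hn ctar s : ℕ) - 1, by omega⟩)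

open Classical in
/-- The lexicographic rank of the binary vector `vec(s)` recording, for each `k ≥ i`,
whether miner `p_k` is on the target coin `s_f.p_i` (earlier coordinates most
significant). -/
noncomputable def vecRank {C : Type*} [DecidableEq C] {n : ℕ}
    (icur : Fin n) (ctar : C) (s : Fin n → C) : ℕ :=
  ∑ k : Fin n, if icur ≤ k ∧ s k = ctar then 2 ^ (n - 1 - (k : ℕ)) else 0

lemma totalPower_nonneg {ι C : Type*} [Fintype ι] [DecidableEq C]
    (m : ι → ℝ) (hm : ∀ p, 0 < m p) (s : ι → C) (c : C) : 0 ≤ totalPower m s c :=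
  Finset.sum_nonneg fun p _ => by split; exacts [(hm p).le, le_rfl]

lemma le_totalPower {ι C : Type*} [Fintype ι] [DecidableEq C]
    (m : ι → ℝ) (hm : ∀ p, 0 < m p) (s : ι → C) {c : C} {p : ι} (hp : s p = c) :
    m p ≤ totalPower m s c := by
  have := Finset.single_le_sum (f := fun q => if s q = c then m q else 0)
    (fun i _ => by split; exacts [(hm i).le, le_rfl]) (Finset.mem_univ p)
  simpa [hp, totalPower] using this

lemma totalPower_update {ι C : Type*} [Fintype ι] [DecidableEq ι] [DecidableEq C]
    (m : ι → ℝ) (t : ι → C) (p : ι) (c d : C) :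
    totalPower m (Function.update t p c) d
      = totalPower m t d - (if t p = d then m p else 0) + (if c = d then m p else 0) := by
  unfold totalPower
  have h : (fun q => if Function.update t p c q = d then m q else 0)
      = Function.update (fun q => if t q = d then m q else 0) p (if c = d then m p else 0) := by
    funext q
    by_cases hq : q = p
    · subst hq; simp
    · simp [Function.update_of_ne hq]
  rw [h, Finset.sum_update_of_mem (Finset.mem_univ p)]
  rw [Finset.sdiff_singleton_eq_erase, Finset.sum_erase_eq_sub (Finset.mem_univ p)]
  ring

lemma maxRPU_pos {ι C : Type*} [Fintype ι] [Fintype C] [DecidableEq C] [Nonempty C] [Nonempty ι]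
    (m : ι → ℝ) (F : C → ℝ) (hm : ∀ p, 0 < m p) (hF : ∀ c, 0 < F c) (s : ι → C) :
    0 < maxRPU m F s := by
  obtain ⟨p⟩ := ‹Nonempty ι›
  have h1 : 0 < RPU m F s (s p) := by
    apply div_pos (hF _)
    exact lt_of_lt_of_le (hm p) (le_totalPower m hm s rfl)
  exact lt_of_lt_of_le h1 (Finset.le_sup' _ (Finset.mem_univ _))

lemma sum_two_pow_lt (N : ℕ) : ∑ j ∈ Finset.range N, 2 ^ j < 2 ^ N := by
  induction N with
  | zero => simp
  | succ k ih => rw [Finset.sum_range_succ, pow_succ]; omega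

lemma sum_Ioi_two_pow_lt {n : ℕ} (mu : Fin n) :
    ∑ k ∈ Finset.Ioi mu, 2 ^ (n - 1 - (k : ℕ)) < 2 ^ (n - 1 - (mu : ℕ)) := by
  have hb : ∑ k ∈ Finset.Ioi mu, 2 ^ (n - 1 - (k : ℕ))
      = ∑ j ∈ Finset.range (n - 1 - (mu : ℕ)), 2 ^ j := by
    apply Finset.sum_bij' (i := fun (k : Fin n) (_ : k ∈ Finset.Ioi mu) => n - 1 - (k : ℕ))
      (j := fun (j : ℕ) (hj : j ∈ Finset.range (n - 1 - (mu : ℕ))) =>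
        (⟨n - 1 - j, by have := mu.isLt; omega⟩ : Fin n))
    · intro a ha
      rw [Finset.mem_range] at ha
      rw [Finset.mem_Ioi, Fin.lt_def]
      have := mu.isLt
      simp only [Fin.val_mk]; omega
    · intro j hj
      rw [Finset.mem_Ioi, Fin.lt_def] at hj
      have := j.isLt
      apply Fin.ext; simp only [Fin.val_mk]; omega
    · intro a ha
      rw [Finset.mem_range] at ha
      simp only [Fin.val_mk]; omega
    · intro j hj; rfl
    · intro a ha
      rw [Finset.mem_Ioi, Fin.lt_def] at ha
      have := a.isLt
      rw [Finset.mem_range]; omega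
  rw [hb]
  exact sum_two_pow_lt _

set_option maxHeartbeats 1600000 in
lemma key_lemma {C : Type*} [Fintype C] [DecidableEq C] [Nonempty C]
    {n : ℕ} (hn : 0 < n) (m : Fin n → ℝ) (F : C → ℝ)
    (hm : ∀ p, 0 < m p) (hF : ∀ c, 0 < F c)
    (hdec : ∀ k l : Fin n, k < l → m l < m k)
    (ctar : C) (s : Fin n → C)
    (hmu0 : 0 < (moverIdx hn ctar s : ℕ))
    (t : Fin n → C)
    (hreach : Relation.ReflTransGen
      (fun u u' => ∃ p c, betterStep m (stageReward hn m F ctar s) u p c ∧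
        u' = Function.update u p c) s t)
    (hstab : stableConfig m (stageReward hn m F ctar s) t) :
    (∀ k : Fin n, (k : ℕ) < (moverIdx hn ctar s : ℕ) → t k = s k) ∧
    (∀ k : Fin n, (moverIdx hn ctar s : ℕ) ≤ (k : ℕ) →
      t k = ctar ∨ t k = s (moverIdx hn ctar s)) ∧
    t (moverIdx hn ctar s) = ctar := by
  set mu := moverIdx hn ctar s with hmu_def
  have hmu_lt : (mu : ℕ) < n := mu.isLt
  have hmem : ∀ l, mu < l → s l = ctar := by
    have h := Finset.min'_mem
      (Finset.filter (fun j : Fin n => ∀ l, j < l → s l = ctar) Finset.univ)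
      ⟨⟨n - 1, by omega⟩, by
        simp only [Finset.mem_filter, Finset.mem_univ, true_and]
        intro l hl
        rw [Fin.lt_def] at hl
        simp only [Fin.val_mk] at hl
        exact absurd hl (by have := l.isLt; omega)⟩
    exact (Finset.mem_filter.mp h).2
  have hmin : ∀ j : Fin n, (∀ l, j < l → s l = ctar) → mu ≤ j := fun j hj =>
    Finset.min'_le _ j (Finset.mem_filter.mpr ⟨Finset.mem_univ j, hj⟩)
  set a : Fin n := ⟨(mu : ℕ) - 1, by omega⟩ with ha_def
  have hsmu : s mu ≠ ctar := by
    intro hcon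
    have hj : ∀ l, a < l → s l = ctar := by
      intro l hl
      rw [Fin.lt_def] at hl
      simp only [ha_def, Fin.val_mk] at hl
      rcases Nat.lt_or_ge (mu : ℕ) (l : ℕ) with h | h
      · exact hmem l (by rwa [Fin.lt_def])
      · have hlm : l = mu := Fin.ext (by omega)
        rw [hlm]; exact hcon
    have hle := hmin a hj
    rw [Fin.le_def] at hle
    simp only [ha_def, Fin.val_mk] at hle
    omega
  set cpre := s mu with hcpre_def
  have hccne : cpre ≠ ctar := hsmu
  haveI : Nonempty (Fin n) := ⟨⟨0, hn⟩⟩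
  set R := maxRPU m F s with hR_def
  have hR : 0 < R := maxRPU_pos m F hm hF s
  set w := m a with hw_def
  have hw0 : 0 < w := hm a
  have hwa : ∀ p : Fin n, (p : ℕ) < (mu : ℕ) → w ≤ m p := by
    intro p hp
    rcases Nat.lt_or_ge (p : ℕ) ((mu : ℕ) - 1) with h | h
    · exact (hdec p a (by rw [Fin.lt_def]; simpa [ha_def] using h)).le
    · have hpa : p = a := Fin.ext (by simp only [ha_def, Fin.val_mk]; omega)
      rw [hpa]
  have hwmu : m mu < w := hdec a mu (by rw [Fin.lt_def]; simp only [ha_def, Fin.val_mk]; omega)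
  set A := totalPower m s ctar with hA_def
  set B := totalPower m s cpre with hB_def
  have hA0 : (0:ℝ) ≤ A := totalPower_nonneg m hm s ctar
  have hB0 : (0:ℝ) < B := lt_of_lt_of_le (hm mu) (le_totalPower m hm s hcpre_def.symm)
  have hAw : (0:ℝ) < A + w := by linarith
  have hFtar : stageReward hn m F ctar s ctar = R * (A + w) := by
    simp only [stageReward, designedReward, if_pos rfl]
    rfl
  have hFother : ∀ d, d ≠ ctar → stageReward hn m F ctar s d = R * totalPower m s d := by
    intro d hd
    simp only [stageReward, designedReward, if_neg hd]
    rfl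
  have hs_suf : ∀ q : Fin n, (mu : ℕ) ≤ (q : ℕ) → s q = ctar ∨ s q = cpre := by
    intro q hq
    rcases Nat.eq_or_lt_of_le hq with h | h
    · exact Or.inr (by rw [show q = mu from Fin.ext h.symm])
    · exact Or.inl (hmem q (by rw [Fin.lt_def]; exact h))
  -- conserved quantities under the invariant
  have hOtherAll : ∀ u : Fin n → C, (∀ k : Fin n, (k : ℕ) < (mu : ℕ) → u k = s k) →
      (∀ k : Fin n, (mu : ℕ) ≤ (k : ℕ) → u k = ctar ∨ u k = cpre) →
      ∀ d, d ≠ ctar → d ≠ cpre → totalPower m u d = totalPower m s d := by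
    intro u h1 h2 d hd1 hd2
    unfold totalPower
    apply Finset.sum_congr rfl
    intro q _
    by_cases hq : (q : ℕ) < (mu : ℕ)
    · rw [h1 q hq]
    · rcases h2 q (le_of_not_gt hq) with h | h <;>
        rcases hs_suf q (le_of_not_gt hq) with h' | h' <;>
        simp [h, h', Ne.symm hd1, Ne.symm hd2]
  have hSumAll : ∀ u : Fin n → C, (∀ k : Fin n, (k : ℕ) < (mu : ℕ) → u k = s k) →
      (∀ k : Fin n, (mu : ℕ) ≤ (k : ℕ) → u k = ctar ∨ u k = cpre) →
      totalPower m u cpre + totalPower m u ctar = B + A := by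
    intro u h1 h2
    rw [hB_def, hA_def]
    unfold totalPower
    rw [← Finset.sum_add_distrib, ← Finset.sum_add_distrib]
    apply Finset.sum_congr rfl
    intro q _
    by_cases hq : (q : ℕ) < (mu : ℕ)
    · rw [h1 q hq]
    · rcases h2 q (le_of_not_gt hq) with h | h <;>
        rcases hs_suf q (le_of_not_gt hq) with h' | h' <;>
        simp [h, h', hccne, Ne.symm hccne]
  -- the invariant is preserved along the dynamics
  have hInv : (∀ k : Fin n, (k : ℕ) < (mu : ℕ) → t k = s k) ∧
      (∀ k : Fin n, (mu : ℕ) ≤ (k : ℕ) → t k = ctar ∨ t k = cpre) ∧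
      A ≤ totalPower m t ctar ∧ totalPower m t ctar ≤ A + w := by
    clear hstab
    induction hreach with
    | refl =>
      refine ⟨fun k _ => rfl, fun k hk => hs_suf k hk, le_refl _, by linarith⟩
    | @tail b u hab hstep ih =>
      obtain ⟨p, c, hbs, rfl⟩ := hstep
      obtain ⟨ih1, ih2, ih3, ih4⟩ := ih
      by_cases hceq : c = b p
      · rw [hceq, Function.update_eq_self]; exact ⟨ih1, ih2, ih3, ih4⟩
      -- set up the cross-multiplied better-step inequality
      have hbpec : b p ≠ c := Ne.symm hceq
      have hbs' : m p * stageReward hn m F ctar s (b p) / totalPower m b (b p)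
          < m p * stageReward hn m F ctar s c / (totalPower m b c + m p) := by
        have h1 : totalPower m (Function.update b p c) c = totalPower m b c + m p := by
          rw [totalPower_update, if_neg hbpec, if_pos rfl]; ring
        unfold betterStep payoff at hbs
        rwa [Function.update_self, h1] at hbs
      have hbp_pos : 0 < totalPower m b (b p) :=
        lt_of_lt_of_le (hm p) (le_totalPower m hm b rfl)
      have hc_nonneg : 0 ≤ totalPower m b c := totalPower_nonneg m hm b c
      have hc_pos : 0 < totalPower m b c + m p := by linarith [hm p]
      have hSum := hSumAll b ih1 ih2
      have hmr : 0 < m p * R := mul_pos (hm p) hR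
      by_cases hbp_tar : b p = ctar
      · -- current coin is ctar
        rw [hbp_tar, hFtar] at hbs'
        have hcne_tar : c ≠ ctar := fun h => hceq (h.trans hbp_tar.symm)
        by_cases hc_pre : c = cpre
        · -- move ctar → cpre
          rw [hc_pre, hFother cpre hccne, ← hB_def] at hbs'
          have hTb_pos : 0 < totalPower m b ctar := hbp_tar ▸ hbp_pos
          rw [div_lt_div_iff₀ hTb_pos (hc_pre ▸ hc_pos)] at hbs'
          have hred : (A + w) * (totalPower m b cpre + m p)
              < B * totalPower m b ctar := by
            have h2 : (m p * R) * ((A + w) * (totalPower m b cpre + m p))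
                < (m p * R) * (B * totalPower m b ctar) := by nlinarith [hbs']
            exact lt_of_mul_lt_mul_left h2 hmr.le
          have hkey : m p < totalPower m b ctar - A := by
            nlinarith [hred, hSum, hA0, hw0.le, sub_nonneg.mpr ih4, hB0.le]
          have hpmu : (mu : ℕ) ≤ (p : ℕ) := by
            by_contra hlt
            push_neg at hlt
            have := hwa p hlt
            linarith [ih4]
          have htp' : totalPower m (Function.update b p c) ctar
              = totalPower m b ctar - m p := by
            rw [totalPower_update, if_pos hbp_tar,
              if_neg (by rw [hc_pre]; exact hccne)]; ring
          refine ⟨?_, ?_, ?_, ?_⟩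
          · intro k hk
            have hknp : k ≠ p := fun h => by rw [h] at hk; omega
            rw [Function.update_of_ne hknp]; exact ih1 k hk
          · intro k hk
            by_cases hkp : k = p
            · subst hkp; rw [Function.update_self]; exact Or.inr hc_pre
            · rw [Function.update_of_ne hkp]; exact ih2 k hk
          · rw [htp']; linarith
          · rw [htp']; linarith [hm p]
        · -- move ctar → other coin : impossible
          exfalso
          rw [hFother c hcne_tar, hOtherAll b ih1 ih2 c hcne_tar hc_pre] at hbs'
          have hTb_pos : 0 < totalPower m b ctar := hbp_tar ▸ hbp_pos
          have hc_pos' : 0 < totalPower m s c + m p := by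
            linarith [totalPower_nonneg m hm s c, hm p]
          rw [div_lt_div_iff₀ hTb_pos hc_pos'] at hbs'
          nlinarith [hbs', mul_pos (mul_pos (hm p) hR) (mul_pos (hm p) hAw),
            mul_nonneg (mul_nonneg (mul_nonneg (hm p).le hR.le)
              (totalPower_nonneg m hm s c)) (sub_nonneg.mpr ih4)]
      · by_cases hbp_pre : b p = cpre
        · -- current coin is cpre
          rw [hbp_pre, hFother cpre hccne, ← hB_def] at hbs'
          have hPb_pos : 0 < totalPower m b cpre := hbp_pre ▸ hbp_pos
          by_cases hc_tar : c = ctar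
          · -- move cpre → ctar
            rw [hc_tar, hFtar] at hbs'
            rw [div_lt_div_iff₀ hPb_pos (hc_tar ▸ hc_pos)] at hbs'
            have hred : B * (totalPower m b ctar + m p)
                < (A + w) * totalPower m b cpre := by
              have h2 : (m p * R) * (B * (totalPower m b ctar + m p))
                  < (m p * R) * ((A + w) * totalPower m b cpre) := by nlinarith [hbs']
              exact lt_of_mul_lt_mul_left h2 hmr.le
            have hkey : totalPower m b ctar + m p < A + w := by
              nlinarith [hred, hSum, sub_nonneg.mpr ih3, hB0.le, hA0, hw0.le]
            have hpmu : (mu : ℕ) ≤ (p : ℕ) := by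
              by_contra hlt
              push_neg at hlt
              have := hwa p hlt
              linarith [ih3]
            have htp' : totalPower m (Function.update b p c) ctar
                = totalPower m b ctar + m p := by
              rw [totalPower_update, if_neg (by rw [hbp_pre]; exact hccne),
                if_pos hc_tar]; ring
            refine ⟨?_, ?_, ?_, ?_⟩
            · intro k hk
              have hknp : k ≠ p := fun h => by rw [h] at hk; omega
              rw [Function.update_of_ne hknp]; exact ih1 k hk
            · intro k hk
              by_cases hkp : k = p
              · subst hkp; rw [Function.update_self]; exact Or.inl hc_tar
              · rw [Function.update_of_ne hkp]; exact ih2 k hk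
            · rw [htp']; linarith [hm p]
            · rw [htp']; linarith
          · -- move cpre → other coin : impossible
            exfalso
            have hc_pre' : c ≠ cpre := fun h => hceq (h.trans hbp_pre.symm)
            rw [hFother c hc_tar, hOtherAll b ih1 ih2 c hc_tar hc_pre'] at hbs'
            have hc_pos' : 0 < totalPower m s c + m p := by
              linarith [totalPower_nonneg m hm s c, hm p]
            rw [div_lt_div_iff₀ hPb_pos hc_pos'] at hbs'
            -- Pb ≤ B since Tb ≥ A
            have hPbB : totalPower m b cpre ≤ B := by linarith [hSum, ih3]
            nlinarith [hbs', mul_pos (mul_pos (hm p) hR) (mul_pos (hm p) hB0),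
              mul_nonneg (mul_nonneg (mul_nonneg (hm p).le hR.le)
                (totalPower_nonneg m hm s c)) (sub_nonneg.mpr hPbB)]
        · -- current coin is neither ctar nor cpre : p < mu, and every move is impossible
          exfalso
          have hplt : (p : ℕ) < (mu : ℕ) := by
            by_contra hge
            rcases ih2 p (le_of_not_gt hge) with h | h
            exacts [hbp_tar h, hbp_pre h]
          have hwp : w ≤ m p := hwa p hplt
          have hb_eq : totalPower m b (b p) = totalPower m s (b p) :=
            hOtherAll b ih1 ih2 (b p) hbp_tar hbp_pre
          rw [hFother (b p) hbp_tar, hb_eq] at hbs'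
          have htps0_pos : 0 < totalPower m s (b p) := hb_eq ▸ hbp_pos
          by_cases hc_tar : c = ctar
          · rw [hc_tar, hFtar] at hbs'
            rw [div_lt_div_iff₀ htps0_pos (hc_tar ▸ hc_pos)] at hbs'
            nlinarith [hbs', mul_nonneg (mul_nonneg (mul_nonneg (hm p).le hR.le)
              htps0_pos.le) (by linarith [ih3] : (0:ℝ) ≤ totalPower m b ctar + m p - (A + w))]
          · by_cases hc_pre : c = cpre
            · rw [hc_pre, hFother cpre hccne, ← hB_def] at hbs'
              rw [div_lt_div_iff₀ htps0_pos (hc_pre ▸ hc_pos)] at hbs'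
              have hPlb : 0 ≤ totalPower m b cpre + m p - B := by linarith [hSum, ih4]
              nlinarith [hbs', mul_nonneg (mul_nonneg (mul_nonneg (hm p).le hR.le)
                htps0_pos.le) hPlb]
            · rw [hFother c hc_tar, hOtherAll b ih1 ih2 c hc_tar hc_pre] at hbs'
              have hc_pos' : 0 < totalPower m s c + m p := by
                linarith [totalPower_nonneg m hm s c, hm p]
              rw [div_lt_div_iff₀ htps0_pos hc_pos'] at hbs'
              nlinarith [hbs', mul_pos (mul_pos (mul_pos (hm p) hR) htps0_pos) (hm p)]
  -- in the stable final configuration, miner mu is on ctar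
  obtain ⟨h1t, h2t, h3t, h4t⟩ := hInv
  have hmu_tar : t mu = ctar := by
    by_contra hcon
    have htpre : t mu = cpre := (h2t mu le_rfl).resolve_left hcon
    have hTA : totalPower m t ctar ≤ A := by
      rw [hA_def]
      unfold totalPower
      apply Finset.sum_le_sum
      intro q _
      by_cases hq : (q : ℕ) < (mu : ℕ)
      · rw [h1t q hq]
      · rcases Nat.eq_or_lt_of_le (le_of_not_gt hq) with h | h
        · have hqm : q = mu := Fin.ext h.symm
          rw [hqm, htpre, if_neg hccne]
        · have hsq : s q = ctar := hmem q (by rw [Fin.lt_def]; exact h)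
          rw [hsq, if_pos rfl]
          split
          exacts [le_rfl, (hm q).le]
    have hTeq : totalPower m t ctar = A := le_antisymm hTA h3t
    have hPB : totalPower m t cpre = B := by
      have := hSumAll t h1t h2t
      linarith
    have hbad : betterStep m (stageReward hn m F ctar s) t mu ctar := by
      unfold betterStep payoff
      rw [Function.update_self, htpre, hFother cpre hccne, ← hB_def, hFtar, hPB]
      have h1 : totalPower m (Function.update t mu ctar) ctar = A + m mu := by
        rw [totalPower_update, if_neg (by rw [htpre]; exact hccne), if_pos rfl, hTeq]
        ring
      rw [h1]
      rw [div_lt_div_iff₀ hB0 (by linarith [hm mu] : (0:ℝ) < A + m mu)]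
      nlinarith [mul_pos (mul_pos (hm mu) hR) hB0, hwmu]
    exact absurd hbad (hstab mu ctar)
  exact ⟨h1t, fun k hk => hcpre_def ▸ h2t k hk, hmu_tar⟩

set_option maxHeartbeats 1600000 in
/-- each stage `i > 1` of the dynamic reward design algorithm terminates:
every loop iteration (better-response learning to convergence under the designed rewards)
strictly increases the lexicographic rank of `vec(s)`, and every run of the loop starting
from `s_{i−1}` reaches `s_i` after finitely many iterations. -/
theorem stage_terminates {C : Type*} [Fintype C] [DecidableEq C] [Nonempty C]
    {n : ℕ} (hn : 0 < n) (m : Fin n → ℝ) (F : C → ℝ) (s_f : Fin n → C)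
    (hm : ∀ p, 0 < m p) (hF : ∀ c, 0 < F c)
    (hdec : ∀ k l : Fin n, k < l → m l < m k)
    (hsf : stableConfig m F s_f)
    (iprev icur : Fin n) (hstage : (iprev : ℕ) + 1 = (icur : ℕ))
    (hcoins : s_f iprev ≠ s_f icur)
    (T : (Fin n → C) → Prop)
    (hTdef : ∀ s, T s ↔
      ((∀ k, k < icur → s k = s_f k) ∧ ∀ k, icur ≤ k → s k = s_f icur ∨ s k = s_f iprev))
    (sStart sEnd : Fin n → C)
    (hStart : sStart = fun k => if k ≤ iprev then s_f k else s_f iprev)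
    (hEnd : sEnd = fun k => if k ≤ icur then s_f k else s_f icur)
    (IterStep : (Fin n → C) → (Fin n → C) → Prop)
    (hIter : ∀ s s', IterStep s s' ↔
      (Relation.ReflTransGen
        (fun t t' => ∃ p c, betterStep m (stageReward hn m F (s_f icur) s) t p c ∧
          t' = Function.update t p c) s s' ∧
        stableConfig m (stageReward hn m F (s_f icur) s) s')) :
    (∀ s s', T s → s ≠ sEnd → IterStep s s' →
        vecRank icur (s_f icur) s < vecRank icur (s_f icur) s') ∧
    (∀ g : ℕ → Fin n → C, g 0 = sStart →
        (∀ k, g k ≠ sEnd → IterStep (g k) (g (k + 1))) →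
        ∃ k, g k = sEnd) := by
  have main : ∀ u v, T u → u ≠ sEnd → IterStep u v →
      (T v ∧ vecRank icur (s_f icur) u < vecRank icur (s_f icur) v) := by
    intro u v hTu hune hIt
    rw [hIter] at hIt
    obtain ⟨hreach, hstab⟩ := hIt
    obtain ⟨hTu1, hTu2⟩ := (hTdef u).mp hTu
    -- a miner with index ≥ icur not on the target coin
    have hex : ∃ k : Fin n, (icur : ℕ) ≤ (k : ℕ) ∧ u k ≠ s_f icur := by
      by_contra hno
      push_neg at hno
      apply hune
      funext k
      rw [hEnd]
      simp only
      by_cases hk : (k : ℕ) < (icur : ℕ)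
      · rw [if_pos (show k ≤ icur by rw [Fin.le_def]; omega),
          hTu1 k (show k < icur by rw [Fin.lt_def]; exact hk)]
      · have hk' : (icur : ℕ) ≤ (k : ℕ) := le_of_not_gt hk
        rw [hno k hk']
        by_cases hk2 : (k : ℕ) = (icur : ℕ)
        · rw [if_pos (show k ≤ icur by rw [Fin.le_def]; omega),
            show k = icur from Fin.ext hk2]
        · rw [if_neg (show ¬ k ≤ icur by rw [Fin.le_def]; omega)]
    obtain ⟨k0, hk0, hk0ne⟩ := hex
    -- properties of the mover index for u
    have hmem : ∀ l, moverIdx hn (s_f icur) u < l → u l = s_f icur := by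
      have h := Finset.min'_mem
        (Finset.filter (fun j : Fin n => ∀ l, j < l → u l = s_f icur) Finset.univ)
        ⟨⟨n - 1, by omega⟩, by
          simp only [Finset.mem_filter, Finset.mem_univ, true_and]
          intro l hl
          rw [Fin.lt_def] at hl
          simp only [Fin.val_mk] at hl
          exact absurd hl (by have := l.isLt; omega)⟩
      exact (Finset.mem_filter.mp h).2
    have hmin : ∀ j : Fin n, (∀ l, j < l → u l = s_f icur) → moverIdx hn (s_f icur) u ≤ j :=
      fun j hj => Finset.min'_le _ j (Finset.mem_filter.mpr ⟨Finset.mem_univ j, hj⟩)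
    have hmuk0 : (k0 : ℕ) ≤ (moverIdx hn (s_f icur) u : ℕ) := by
      by_contra hlt
      push_neg at hlt
      exact hk0ne (hmem k0 (by rw [Fin.lt_def]; exact hlt))
    have hmu0 : 0 < (moverIdx hn (s_f icur) u : ℕ) := by omega
    have hmuicur : (icur : ℕ) ≤ (moverIdx hn (s_f icur) u : ℕ) := by omega
    have hmu_lt : (moverIdx hn (s_f icur) u : ℕ) < n := (moverIdx hn (s_f icur) u).isLt
    have hsmu : u (moverIdx hn (s_f icur) u) ≠ s_f icur := by
      intro hcon
      have hj : ∀ l, (⟨(moverIdx hn (s_f icur) u : ℕ) - 1, by omega⟩ : Fin n) < l →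
          u l = s_f icur := by
        intro l hl
        rw [Fin.lt_def] at hl
        simp only [Fin.val_mk] at hl
        rcases Nat.lt_or_ge ((moverIdx hn (s_f icur) u : ℕ)) (l : ℕ) with h | h
        · exact hmem l (by rwa [Fin.lt_def])
        · have hlm : l = moverIdx hn (s_f icur) u := Fin.ext (by omega)
          rw [hlm]; exact hcon
      have hle := hmin _ hj
      rw [Fin.le_def] at hle
      simp only [Fin.val_mk] at hle
      omega
    -- apply the key lemma
    obtain ⟨hk1, hk2, hk3⟩ :=
      key_lemma hn m F hm hF hdec (s_f icur) u hmu0 v hreach hstab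
    -- v is in T
    have hTv : T v := by
      rw [hTdef]
      constructor
      · intro k hk
        rw [Fin.lt_def] at hk
        rw [hk1 k (by omega)]
        exact hTu1 k (by rw [Fin.lt_def]; exact hk)
      · intro k hk
        rw [Fin.le_def] at hk
        by_cases hkm : (k : ℕ) < (moverIdx hn (s_f icur) u : ℕ)
        · rw [hk1 k hkm]
          exact hTu2 k (by rw [Fin.le_def]; exact hk)
        · rcases hk2 k (by omega) with h | h
          · exact Or.inl h
          · rw [h]
            rcases hTu2 (moverIdx hn (s_f icur) u) (by rw [Fin.le_def]; omega) with h' | h'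
            · exact absurd h' hsmu
            · exact Or.inr h'
    refine ⟨hTv, ?_⟩
    -- the lexicographic rank strictly increases
    have hdisj : Disjoint (Finset.Iic (moverIdx hn (s_f icur) u))
        (Finset.Ioi (moverIdx hn (s_f icur) u)) := by
      rw [Finset.disjoint_left]
      intro x hx hx2
      rw [Finset.mem_Iic] at hx
      rw [Finset.mem_Ioi] at hx2
      exact absurd hx (not_le.mpr hx2)
    have huniv : Finset.Iic (moverIdx hn (s_f icur) u)
        ∪ Finset.Ioi (moverIdx hn (s_f icur) u) = Finset.univ := by
      ext k; simp [le_or_gt]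
    unfold vecRank
    rw [← huniv, Finset.sum_union hdisj, Finset.sum_union hdisj,
      ← Finset.Iio_insert, Finset.sum_insert (by simp), Finset.sum_insert (by simp)]
    rw [if_neg (fun h => hsmu h.2)]
    rw [if_pos ⟨(show icur ≤ moverIdx hn (s_f icur) u by rw [Fin.le_def]; omega), hk3⟩]
    have key1 : ∑ k ∈ Finset.Iio (moverIdx hn (s_f icur) u),
          (if icur ≤ k ∧ v k = s_f icur then 2 ^ (n - 1 - (k : ℕ)) else 0)
        = ∑ k ∈ Finset.Iio (moverIdx hn (s_f icur) u),
          (if icur ≤ k ∧ u k = s_f icur then 2 ^ (n - 1 - (k : ℕ)) else 0) := by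
      apply Finset.sum_congr rfl
      intro k hk
      rw [Finset.mem_Iio] at hk
      rw [hk1 k (Fin.lt_def.mp hk)]
    rw [key1]
    have hb1 : ∑ k ∈ Finset.Ioi (moverIdx hn (s_f icur) u),
          (if icur ≤ k ∧ u k = s_f icur then 2 ^ (n - 1 - (k : ℕ)) else 0)
        < 2 ^ (n - 1 - (moverIdx hn (s_f icur) u : ℕ)) :=
      lt_of_le_of_lt
        (Finset.sum_le_sum (fun k _ => by split; exacts [le_rfl, Nat.zero_le _]))
        (sum_Ioi_two_pow_lt _)
    omega
  constructor
  · intro u v hTu hune hIt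
    exact (main u v hTu hune hIt).2
  · intro g hg0 hgstep
    by_contra hno
    push_neg at hno
    have hTstart : T sStart := by
      rw [hTdef]
      simp only [hStart]
      constructor
      · intro k hk
        rw [Fin.lt_def] at hk
        rw [if_pos (show k ≤ iprev by rw [Fin.le_def]; omega)]
      · intro k hk
        rw [Fin.le_def] at hk
        rw [if_neg (show ¬ k ≤ iprev by rw [Fin.le_def]; omega)]
        exact Or.inr rfl
    have hbound : ∀ uu : Fin n → C, vecRank icur (s_f icur) uu ≤ n * 2 ^ n := by
      intro uu
      unfold vecRank
      calc ∑ k : Fin n, (if icur ≤ k ∧ uu k = s_f icur then 2 ^ (n - 1 - (k : ℕ)) else 0)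
          ≤ ∑ _k : Fin n, 2 ^ n := Finset.sum_le_sum (fun k _ => by
            split
            · exact Nat.pow_le_pow_right (by norm_num) (by omega)
            · exact Nat.zero_le _)
        _ = n * 2 ^ n := by
            rw [Finset.sum_const, Finset.card_univ, Fintype.card_fin, smul_eq_mul]
    have hind : ∀ k : ℕ, T (g k) ∧ k ≤ vecRank icur (s_f icur) (g k) := by
      intro k
      induction k with
      | zero => exact ⟨by rw [hg0]; exact hTstart, Nat.zero_le _⟩
      | succ j ih =>
        have h := main (g j) (g (j + 1)) ih.1 (hno j) (hgstep j (hno j))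
        exact ⟨h.1, by omega⟩
    have h1 := (hind (n * 2 ^ n + 1)).2
    have h2 := hbound (g (n * 2 ^ n + 1))
    omega
end
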